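/- Let J ∈ ℝ^{(3+L)×3N} be a matrix whose first 3 rows are √μ·(1_Nᵀ ⊗ I₃) and whose remaining rows are vectors v_sᵀ, where each v_s has a vector φ_s in 3-block i_s, −φ_s in 3-block j_s, and zeros elsewhere. Suppose there exists a nonzero ζ ∈ ℝ³ and a nonempty subset V_c ⊆ {1,…,N} containing an index a such that: (i) ζᵀφ_s = 0 for every s with {i_s, j_s} ⊆ V_c, and (ii) every s with a ∈ {i_s, j_s} satisfies {i_s, j_s} ⊆ V_c. Then the nonzero vector w = [k₁ζ; k₂ζ; …; k_Nζ] with k_a = −(N−1) and k_i = 1 for i ≠ a satisfies Jw = 0; hence rank(J) < 3N and det(JᵀJ) = 0. -/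

import Mathlib

open Matrix

theorem degeneration_identification (N L : ℕ) (hN : 2 ≤ N)
    (μ : ℝ) (hμ : 0 < μ)
    (is js : Fin L → Fin N) (hdist : ∀ s, is s ≠ js s)
    (φ : Fin L → Fin 3 → ℝ)
    (v : Fin L → Fin N × Fin 3 → ℝ)
    (hv : ∀ s p, v s p =
      if p.1 = is s then φ s p.2 else if p.1 = js s then -(φ s p.2) else 0)
    (J : Matrix (Fin 3 ⊕ Fin L) (Fin N × Fin 3) ℝ)
    (hJtop : ∀ a (p : Fin N × Fin 3),
      J (Sum.inl a) p = Real.sqrt μ * (if a = p.2 then 1 else 0))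
    (hJbot : ∀ s p, J (Sum.inr s) p = v s p)
    (ζ : Fin 3 → ℝ) (hζ : ζ ≠ 0)
    (Vc : Finset (Fin N)) (a : Fin N) (ha : a ∈ Vc)
    (hcop : ∀ s, is s ∈ Vc → js s ∈ Vc → ζ ⬝ᵥ φ s = 0)
    (hiso : ∀ s, (is s = a ∨ js s = a) → is s ∈ Vc ∧ js s ∈ Vc) :
    let w : Fin N × Fin 3 → ℝ :=
      fun p => (if p.1 = a then -((N : ℝ) - 1) else 1) * ζ p.2
    w ≠ 0 ∧ J.mulVec w = 0 ∧ J.rank < 3 * N ∧ (Jᵀ * J).det = 0 := by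
  intro w
  -- w ≠ 0
  have hw0 : w ≠ 0 := by
    intro h
    obtain ⟨r, hr⟩ : ∃ r, ζ r ≠ 0 := by
      by_contra hall; push_neg at hall
      exact hζ (funext hall)
    obtain ⟨b, hb⟩ := Fintype.exists_ne_of_one_lt_card (by simpa using (show 1 < N by omega)) a
    have := congrFun h (b, r)
    simp only [w, if_neg hb, one_mul, Pi.zero_apply] at this
    exact hr this
  -- coefficient function
  set k : Fin N → ℝ := fun i => if i = a then -((N : ℝ) - 1) else 1 with hk
  have hksum : ∑ i, k i = 0 := by
    have hstep : ∀ i : Fin N, k i = (if i = a then -(N : ℝ) else 0) + 1 := by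
      intro i
      by_cases h : i = a <;> simp [hk, h] <;> ring
    rw [Finset.sum_congr rfl (fun i _ => hstep i), Finset.sum_add_distrib,
      Finset.sum_ite_eq' Finset.univ a (fun _ => -(N : ℝ))]
    simp
  have hmul : J.mulVec w = 0 := by
    funext x
    rw [Pi.zero_apply]
    cases x with
    | inl r =>
      have hterm : ∀ i : Fin N, ∀ c : Fin 3,
          J (Sum.inl r) (i, c) * w (i, c)
            = if c = r then Real.sqrt μ * ζ r * k i else 0 := by
        intro i c
        rw [hJtop]
        by_cases hc : c = r
        · subst hc
          rw [if_pos rfl, if_pos rfl]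
          show Real.sqrt μ * 1 * (k i * ζ c) = _
          ring
        · simp [w, Ne.symm hc, hc]
      simp only [mulVec, dotProduct, Fintype.sum_prod_type, hterm,
        Finset.sum_ite_eq' Finset.univ r, Finset.mem_univ, if_true]
      rw [← Finset.mul_sum, hksum, mul_zero]
    | inr s =>
      have hsum : ∀ i : Fin N, ∑ c : Fin 3, J (Sum.inr s) (i, c) * w (i, c)
          = (if i = is s then k (is s) else if i = js s then -(k (js s)) else 0)
              * (ζ ⬝ᵥ φ s) := by
        intro i
        by_cases h1 : i = is s
        · subst h1
          have hterm : ∀ c : Fin 3, J (Sum.inr s) (is s, c) * w (is s, c)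
              = k (is s) * (ζ c * φ s c) := by
            intro c
            rw [hJbot, hv]
            show (if is s = is s then φ s c else _) * (k (is s) * ζ c) = _
            rw [if_pos rfl]; ring
          rw [if_pos rfl, dotProduct, Finset.mul_sum]
          exact Finset.sum_congr rfl (fun c _ => hterm c)
        · by_cases h2 : i = js s
          · subst h2
            have hterm : ∀ c : Fin 3, J (Sum.inr s) (js s, c) * w (js s, c)
                = -(k (js s)) * (ζ c * φ s c) := by
              intro c
              rw [hJbot, hv]
              show (if js s = is s then φ s c
                else if js s = js s then -(φ s c) else 0) * (k (js s) * ζ c) = _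
              rw [if_neg (Ne.symm (hdist s)), if_pos rfl]; ring
            rw [if_neg h1, if_pos rfl, dotProduct, Finset.mul_sum]
            exact Finset.sum_congr rfl (fun c _ => hterm c)
          · rw [if_neg h1, if_neg h2, zero_mul]
            apply Finset.sum_eq_zero
            intro c _
            rw [hJbot, hv]
            show (if i = is s then φ s c
              else if i = js s then -(φ s c) else 0) * _ = 0
            rw [if_neg h1, if_neg h2, zero_mul]
      simp only [mulVec, dotProduct, Fintype.sum_prod_type, hsum]
      rw [← Finset.sum_mul]
      by_cases hcase : is s = a ∨ js s = a
      · have hz := hcop s (hiso s hcase).1 (hiso s hcase).2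
        rw [dotProduct] at hz
        rw [hz, mul_zero]
      · push_neg at hcase
        have hfun : ∀ x : Fin N,
            (if x = is s then k (is s) else if x = js s then -(k (js s)) else 0)
            = (if x = is s then k (is s) else 0)
              + (if x = js s then -(k (js s)) else 0) := by
          intro x
          by_cases h1 : x = is s
          · subst h1
            rw [if_pos rfl, if_pos rfl, if_neg (hdist s), add_zero]
          · by_cases h2 : x = js s <;> simp [h1, h2, Ne.symm (hdist s)]
        rw [Finset.sum_congr rfl (fun x _ => hfun x), Finset.sum_add_distrib,
          Finset.sum_ite_eq' Finset.univ (is s), Finset.sum_ite_eq' Finset.univ (js s)]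
        have hk1 : k (is s) = 1 := by simp [hk, hcase.1]
        have hk2 : k (js s) = 1 := by simp [hk, hcase.2]
        simp [hk1, hk2]
  refine ⟨hw0, hmul, ?_, ?_⟩
  · -- rank
    have hker : w ∈ LinearMap.ker J.mulVecLin := by
      simpa [Matrix.mulVecLin_apply] using hmul
    have hkpos : 0 < Module.finrank ℝ (LinearMap.ker J.mulVecLin) := by
      rw [Module.finrank_pos_iff_exists_ne_zero]
      exact ⟨⟨w, hker⟩, by simpa using hw0⟩
    have hrn := LinearMap.finrank_range_add_finrank_ker J.mulVecLin
    rw [Module.finrank_fintype_fun_eq_card] at hrn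
    have hcard : Fintype.card (Fin N × Fin 3) = 3 * N := by simp [mul_comm]
    rw [Matrix.rank]
    omega
  · -- det
    rw [← Matrix.exists_mulVec_eq_zero_iff]
    exact ⟨w, hw0, by rw [← Matrix.mulVec_mulVec, hmul, Matrix.mulVec_zero]⟩
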